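/- Define polynomials P^{(2n)}_{r,s} in x₁,…,x_{2n} recursively by P^{(2n)}_{1,s} = e^{(2n)}_{2s−1} and P^{(2n)}_{r,s} = P^{(2n)}_{r−1,s+1} − e^{(2n)}_{2s} P^{(2n)}_{r−1,1} for r ≥ 2. Then under the specialization (x_{2n−1}, x_{2n}) = (x, −x) one has P̄^{(2n)}_{r,s} = P^{(2n−2)}_{r,s} − x² P^{(2n−2)}_{r,s−1} for all r ≥ 1 and all s ∈ ℤ. -/
import Mathlib


/-- Value of the elementary symmetric polynomial at a point of `ℂ^N`, indexed by `ℤ`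
with the convention `e_k = 0` for `k < 0` (and automatically `e_k = 0` for `k > N`). -/
noncomputable def esymmZ {N : ℕ} (x : Fin N → ℂ) (k : ℤ) : ℂ :=
  if 0 ≤ k then
    ∑ s ∈ Finset.powersetCard k.toNat (Finset.univ : Finset (Fin N)), ∏ i ∈ s, x i
  else 0

/-- The polynomials `P^{(N)}_{r,s}` (evaluated at a point of `ℂ^N`), defined by
`P_{1,s} = e_{2s−1}` and `P_{r,s} = P_{r−1,s+1} − e_{2s} P_{r−1,1}` for `r ≥ 2`
(the value for `r = 0` is irrelevant and set to `0`). -/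
noncomputable def Pval {N : ℕ} (x : Fin N → ℂ) : ℕ → ℤ → ℂ
  | 0, _ => 0
  | 1, s => esymmZ x (2 * s - 1)
  | (r + 2), s => Pval x (r + 1) (s + 1) - esymmZ x (2 * s) * Pval x (r + 1) 1

open Polynomial in
noncomputable def polyOf {N : ℕ} (v : Fin N → ℂ) : Polynomial ℂ :=
  ∏ i, (Polynomial.X + Polynomial.C (v i))

open Polynomial

lemma esymmZ_neg {N : ℕ} (v : Fin N → ℂ) {k : ℤ} (h : k < 0) : esymmZ v k = 0 := by
  rw [esymmZ, if_neg (by omega)]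

lemma esymmZ_gt {N : ℕ} (v : Fin N → ℂ) {k : ℤ} (h : (N : ℤ) < k) : esymmZ v k = 0 := by
  rw [esymmZ, if_pos (by omega)]
  rw [Finset.powersetCard_eq_empty.2 (by simp; omega), Finset.sum_empty]

lemma coeff_polyOf {N : ℕ} (v : Fin N → ℂ) (j : ℕ) :
    (polyOf v).coeff j = esymmZ v ((N : ℤ) - j) := by
  by_cases h : j ≤ N
  · rw [polyOf, Finset.prod_X_add_C_coeff _ _ (by simpa using h)]
    rw [esymmZ, if_pos (by omega)]
    congr 1
    simp [Finset.card_univ]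
  · have hd : (polyOf v).natDegree < j := by
      have : (polyOf v).natDegree ≤ N := by
        refine le_trans (Polynomial.natDegree_prod_le _ _) ?_
        simp [Polynomial.natDegree_X_add_C]
      omega
    rw [Polynomial.coeff_eq_zero_of_natDegree_lt hd, esymmZ_neg _ (by omega)]

lemma esymmZ_eq_coeff {N : ℕ} (v : Fin N → ℂ) {k : ℤ} (h0 : 0 ≤ k) (hN : k ≤ N) :
    esymmZ v k = (polyOf v).coeff ((N : ℤ) - k).toNat := by
  rw [coeff_polyOf]
  congr 1
  omega

lemma polyOf_append {n : ℕ} (y : Fin (2 * n) → ℂ) (x : ℂ) :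
    polyOf (Fin.append y ![x, -x]) = polyOf y * (X ^ 2 - C (x ^ 2)) := by
  rw [polyOf, Fin.prod_univ_add]
  simp only [Fin.append_left, Fin.append_right]
  rw [Fin.prod_univ_two]
  simp only [Matrix.cons_val_zero, Matrix.cons_val_one, Matrix.head_cons, map_neg, map_pow]
  rw [polyOf]
  ring

lemma esymmZ_append {n : ℕ} (y : Fin (2 * n) → ℂ) (x : ℂ) (k : ℤ) :
    esymmZ (Fin.append y ![x, -x]) k = esymmZ y k - x ^ 2 * esymmZ y (k - 2) := by
  rcases lt_or_ge k 0 with hk | hk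
  · rw [esymmZ_neg _ hk, esymmZ_neg _ hk, esymmZ_neg _ (by omega)]; ring
  rcases le_or_gt k (2 * n + 2) with hk2 | hk2
  · rw [esymmZ_eq_coeff _ hk (by push_cast; omega), polyOf_append, mul_sub, coeff_sub,
      coeff_mul_X_pow', coeff_mul_C]
    set j : ℕ := (((2 * n + 2 : ℕ) : ℤ) - k).toNat with hj
    have hjk : (j : ℤ) = 2 * n + 2 - k := by omega
    by_cases h2 : 2 ≤ j
    · rw [if_pos h2, coeff_polyOf, coeff_polyOf]
      rw [show ((2 * n : ℕ) : ℤ) - ((j - 2 : ℕ) : ℤ) = k by push_cast; omega,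
        show ((2 * n : ℕ) : ℤ) - (j : ℤ) = k - 2 by push_cast; omega]
      ring
    · rw [if_neg h2, coeff_polyOf,
        show ((2 * n : ℕ) : ℤ) - (j : ℤ) = k - 2 by push_cast; omega,
        esymmZ_gt y (k := k) (by push_cast; omega)]
      ring
  · rw [esymmZ_gt _ (by push_cast; omega), esymmZ_gt y (k := k) (by push_cast; omega),
      esymmZ_gt y (k := k - 2) (by push_cast; omega)]
    ring

lemma esymmZ_zero {N : ℕ} (v : Fin N → ℂ) : esymmZ v 0 = 1 := by
  rw [esymmZ, if_pos le_rfl]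
  simp

lemma Pval_zero_arg {N : ℕ} (v : Fin N → ℂ) : ∀ r : ℕ, 1 ≤ r → Pval v r 0 = 0
  | 1, _ => by
    show esymmZ v (2 * 0 - 1) = 0
    rw [esymmZ_neg _ (by omega)]
  | (r + 2), _ => by
    show Pval v (r + 1) (0 + 1) - esymmZ v (2 * 0) * Pval v (r + 1) 1 = 0
    norm_num [esymmZ_zero]

/-- Under the specialization `(x_{2n−1}, x_{2n}) = (x, −x)` one has
`P̄^{(2n)}_{r,s} = P^{(2n−2)}_{r,s} − x² P^{(2n−2)}_{r,s−1}` for all `r ≥ 1`, `s ∈ ℤ`. -/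
theorem Pval_specialize (n : ℕ) (y : Fin (2 * n) → ℂ) (x : ℂ) (r : ℕ) (hr : 1 ≤ r) (s : ℤ) :
    Pval (Fin.append y ![x, -x]) r s = Pval y r s - x ^ 2 * Pval y r (s - 1) := by
  clear hr
  induction r generalizing s with
  | zero => show (0 : ℂ) = 0 - x ^ 2 * 0; ring
  | succ r ih =>
    match r with
    | 0 =>
      show esymmZ _ (2 * s - 1) = esymmZ y (2 * s - 1) - x ^ 2 * esymmZ y (2 * (s - 1) - 1)
      rw [esymmZ_append, show 2 * s - 1 - 2 = 2 * (s - 1) - 1 by ring]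
    | (m + 1) =>
      show Pval _ (m + 1) (s + 1) - esymmZ _ (2 * s) * Pval _ (m + 1) 1
          = (Pval y (m + 1) (s + 1) - esymmZ y (2 * s) * Pval y (m + 1) 1)
            - x ^ 2 * (Pval y (m + 1) (s - 1 + 1) - esymmZ y (2 * (s - 1)) * Pval y (m + 1) 1)
      rw [ih (s + 1), ih 1, esymmZ_append,
        show (1 : ℤ) - 1 = 0 by norm_num, show s + 1 - 1 = s by ring,
        show s - 1 + 1 = s by ring, show (2 : ℤ) * s - 2 = 2 * (s - 1) by ring,
        Pval_zero_arg y (m + 1) (by omega)]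
      ring
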